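/- Let X ≥ 0, Z_1 ≥ Y_1 ≥ 0 and Z_2 ≥ Y_2 ≥ 0 be random variables such that Y_1 is independent of (Y_2, Z_2), Y_2 is independent of (Y_1, Z_1), and for i ∈ {1,2}, Z_i < X implies Z_i = 0. Then (with the convention 0/0 = 0), Cov(Y_1/(X+Z_1), Y_2/(X+Z_2)) ≤ E[Y_1/Z_1]·E[Y_2 X/Z_2^2] + E[Y_2/Z_2]·E[Y_1 X/Z_1^2] + (1/(E[Z_1]E[Z_2]))·sqrt(E[(Y_1(Z_1−E[Z_1])/Z_1)^2]·E[(Y_2(Z_2−E[Z_2])/Z_2)^2]). -/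

import Mathlib

open MeasureTheory ProbabilityTheory


private lemma abs_mul_le_half_sq (a b : ℝ) : ‖a * b‖ ≤ (a ^ 2 + b ^ 2) / 2 := by
  rw [Real.norm_eq_abs, abs_mul]
  nlinarith [two_mul_le_add_sq |a| |b|, sq_abs a, sq_abs b, abs_nonneg a, abs_nonneg b]

private lemma integrable_mul_of_sq {Ω : Type*} [MeasurableSpace Ω] {μ : Measure Ω}
    {f g : Ω → ℝ} (hfm : AEStronglyMeasurable f μ) (hgm : AEStronglyMeasurable g μ)
    (hf : Integrable (fun ω => f ω ^ 2) μ) (hg : Integrable (fun ω => g ω ^ 2) μ) :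
    Integrable (fun ω => f ω * g ω) μ :=
  Integrable.mono' ((hf.add hg).div_const 2) (hfm.mul hgm)
    (Filter.Eventually.of_forall fun ω => abs_mul_le_half_sq (f ω) (g ω))

private lemma integral_mul_le_sqrt {Ω : Type*} [MeasurableSpace Ω] {μ : Measure Ω}
    {f g : Ω → ℝ} (hfm : AEStronglyMeasurable f μ) (hgm : AEStronglyMeasurable g μ)
    (hf : Integrable (fun ω => f ω ^ 2) μ) (hg : Integrable (fun ω => g ω ^ 2) μ) :
    ∫ ω, f ω * g ω ∂μ ≤ Real.sqrt ((∫ ω, f ω ^ 2 ∂μ) * (∫ ω, g ω ^ 2 ∂μ)) := by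
  set A := ∫ ω, f ω ^ 2 ∂μ with hA
  set B := ∫ ω, g ω ^ 2 ∂μ with hB
  have hA0 : 0 ≤ A := integral_nonneg fun ω => sq_nonneg _
  have hB0 : 0 ≤ B := integral_nonneg fun ω => sq_nonneg _
  have hfg : Integrable (fun ω => f ω * g ω) μ := integrable_mul_of_sq hfm hgm hf hg
  rcases eq_or_lt_of_le hA0 with h | hApos
  · have hzero : (fun ω => f ω ^ 2) =ᵐ[μ] 0 :=
      (integral_eq_zero_iff_of_nonneg (fun ω => sq_nonneg _) hf).1 h.symm
    have hz2 : (fun ω => f ω * g ω) =ᵐ[μ] 0 := by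
      filter_upwards [hzero] with ω hω
      have hf0 : f ω = 0 := by
        have : f ω ^ 2 = 0 := hω
        exact pow_eq_zero_iff (by norm_num) |>.1 this
      simp [hf0]
    rw [integral_eq_zero_of_ae hz2]
    positivity
  rcases eq_or_lt_of_le hB0 with h | hBpos
  · have hzero : (fun ω => g ω ^ 2) =ᵐ[μ] 0 :=
      (integral_eq_zero_iff_of_nonneg (fun ω => sq_nonneg _) hg).1 h.symm
    have hz2 : (fun ω => f ω * g ω) =ᵐ[μ] 0 := by
      filter_upwards [hzero] with ω hω
      have hg0 : g ω = 0 := by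
        have : g ω ^ 2 = 0 := hω
        exact pow_eq_zero_iff (by norm_num) |>.1 this
      simp [hg0]
    rw [integral_eq_zero_of_ae hz2]
    positivity
  · set t := Real.sqrt B / Real.sqrt A with ht
    have hsA : 0 < Real.sqrt A := Real.sqrt_pos.2 hApos
    have hsB : 0 < Real.sqrt B := Real.sqrt_pos.2 hBpos
    have htpos : 0 < t := div_pos hsB hsA
    have hpt : ∀ ω, f ω * g ω ≤ (t * f ω ^ 2 + g ω ^ 2 / t) / 2 := by
      intro ω
      have h1 : g ω ^ 2 / t * t = g ω ^ 2 := div_mul_cancel₀ _ htpos.ne'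
      nlinarith [sq_nonneg (t * f ω - g ω), htpos, h1]
    have hint : Integrable (fun ω => (t * f ω ^ 2 + g ω ^ 2 / t) / 2) μ :=
      ((hf.const_mul t).add (hg.div_const t)).div_const 2
    have hle : ∫ ω, f ω * g ω ∂μ ≤ ∫ ω, (t * f ω ^ 2 + g ω ^ 2 / t) / 2 ∂μ :=
      integral_mono hfg hint hpt
    have hcalc : ∫ ω, (t * f ω ^ 2 + g ω ^ 2 / t) / 2 ∂μ = (t * A + B / t) / 2 := by
      rw [integral_div, integral_add (hf.const_mul t) (hg.div_const t),
        integral_const_mul, integral_div]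
    have e1 : t * A = Real.sqrt B * Real.sqrt A := by
      rw [ht, div_mul_eq_mul_div, mul_div_assoc, Real.div_sqrt]
    have e2 : B / t = Real.sqrt B * Real.sqrt A := by
      rw [ht, div_div_eq_mul_div, mul_comm B, mul_div_assoc, Real.div_sqrt]; ring
    have hval : (t * A + B / t) / 2 = Real.sqrt (A * B) := by
      rw [e1, e2, Real.sqrt_mul hA0]
      ring
    calc ∫ ω, f ω * g ω ∂μ ≤ ∫ ω, (t * f ω ^ 2 + g ω ^ 2 / t) / 2 ∂μ := hle
      _ = (t * A + B / t) / 2 := hcalc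
      _ = Real.sqrt (A * B) := hval

private lemma cov_le_sqrt {Ω : Type*} [MeasurableSpace Ω] {μ : Measure Ω} [IsProbabilityMeasure μ]
    {f g : Ω → ℝ} (hfm : AEStronglyMeasurable f μ) (hgm : AEStronglyMeasurable g μ)
    (hf : Integrable (fun ω => f ω ^ 2) μ) (hg : Integrable (fun ω => g ω ^ 2) μ) :
    (∫ ω, f ω * g ω ∂μ) - (∫ ω, f ω ∂μ) * (∫ ω, g ω ∂μ)
      ≤ Real.sqrt ((∫ ω, f ω ^ 2 ∂μ) * (∫ ω, g ω ^ 2 ∂μ)) := by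
  have hfL2 : MemLp f 2 μ := (memLp_two_iff_integrable_sq hfm).2 hf
  have hgL2 : MemLp g 2 μ := (memLp_two_iff_integrable_sq hgm).2 hg
  have hfi : Integrable f μ := hfL2.integrable one_le_two
  have hgi : Integrable g μ := hgL2.integrable one_le_two
  set c := ∫ ω, f ω ∂μ with hc
  set d := ∫ ω, g ω ∂μ with hd
  have hVm : AEStronglyMeasurable (fun ω => f ω - c) μ := hfm.sub aestronglyMeasurable_const
  have hUm : AEStronglyMeasurable (fun ω => g ω - d) μ := hgm.sub aestronglyMeasurable_const
  have hV2 : Integrable (fun ω => (f ω - c) ^ 2) μ :=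
    (memLp_two_iff_integrable_sq hVm).1 (hfL2.sub (memLp_const c))
  have hU2 : Integrable (fun ω => (g ω - d) ^ 2) μ :=
    (memLp_two_iff_integrable_sq hUm).1 (hgL2.sub (memLp_const d))
  have hfg : Integrable (fun ω => f ω * g ω) μ := integrable_mul_of_sq hfm hgm hf hg
  have hVU : ∫ ω, (f ω - c) * (g ω - d) ∂μ = (∫ ω, f ω * g ω ∂μ) - c * d := by
    have hrw : (fun ω => (f ω - c) * (g ω - d))
        = fun ω => (f ω * g ω - d * f ω - c * g ω) + c * d := by funext ω; ring
    have I2 : Integrable (fun ω => f ω * g ω - d * f ω) μ := hfg.sub (hfi.const_mul d)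
    have I1 : Integrable (fun ω => f ω * g ω - d * f ω - c * g ω) μ := I2.sub (hgi.const_mul c)
    rw [hrw, integral_add I1 (integrable_const _), integral_sub I2 (hgi.const_mul c),
      integral_sub hfg (hfi.const_mul d), integral_const_mul, integral_const_mul, integral_const]
    simp [← hc, ← hd]
    ring
  have hVsq : ∫ ω, (f ω - c) ^ 2 ∂μ ≤ ∫ ω, f ω ^ 2 ∂μ := by
    have hrw : (fun ω => (f ω - c) ^ 2) = fun ω => (f ω ^ 2 - 2 * c * f ω) + c ^ 2 := by
      funext ω; ring
    have I1 : Integrable (fun ω => f ω ^ 2 - 2 * c * f ω) μ := hf.sub (hfi.const_mul (2 * c))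
    rw [hrw, integral_add I1 (integrable_const _),
      integral_sub hf (hfi.const_mul (2 * c)), integral_const_mul, integral_const]
    simp [← hc]
    nlinarith [sq_nonneg c]
  have hUsq : ∫ ω, (g ω - d) ^ 2 ∂μ ≤ ∫ ω, g ω ^ 2 ∂μ := by
    have hrw : (fun ω => (g ω - d) ^ 2) = fun ω => (g ω ^ 2 - 2 * d * g ω) + d ^ 2 := by
      funext ω; ring
    have I1 : Integrable (fun ω => g ω ^ 2 - 2 * d * g ω) μ := hg.sub (hgi.const_mul (2 * d))
    rw [hrw, integral_add I1 (integrable_const _),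
      integral_sub hg (hgi.const_mul (2 * d)), integral_const_mul, integral_const]
    simp [← hd]
    nlinarith [sq_nonneg d]
  have hU0 : 0 ≤ ∫ ω, (g ω - d) ^ 2 ∂μ := integral_nonneg fun ω => sq_nonneg _
  have hf20 : 0 ≤ ∫ ω, f ω ^ 2 ∂μ := integral_nonneg fun ω => sq_nonneg _
  calc (∫ ω, f ω * g ω ∂μ) - c * d = ∫ ω, (f ω - c) * (g ω - d) ∂μ := hVU.symm
    _ ≤ Real.sqrt ((∫ ω, (f ω - c) ^ 2 ∂μ) * (∫ ω, (g ω - d) ^ 2 ∂μ)) :=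
        integral_mul_le_sqrt hVm hUm hV2 hU2
    _ ≤ Real.sqrt ((∫ ω, f ω ^ 2 ∂μ) * (∫ ω, g ω ^ 2 ∂μ)) :=
        Real.sqrt_le_sqrt (mul_le_mul hVsq hUsq hU0 hf20)


private lemma lower_bound {Ω : Type*} [MeasurableSpace Ω] {μ : Measure Ω}
    {X Y Z : Ω → ℝ} (hX : ∀ ω, 0 ≤ X ω) (hY : ∀ ω, 0 ≤ Y ω) (hYZ : ∀ ω, Y ω ≤ Z ω)
    (hZX : ∀ ω, Z ω < X ω → Z ω = 0)
    (hiA : Integrable (fun ω => Y ω / (X ω + Z ω)) μ)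
    (hiR : Integrable (fun ω => Y ω / Z ω) μ)
    (hia : Integrable (fun ω => Y ω * X ω / Z ω ^ 2) μ) :
    0 ≤ (∫ ω, Y ω / Z ω ∂μ) - (∫ ω, Y ω * X ω / Z ω ^ 2 ∂μ) ∧
      (∫ ω, Y ω / Z ω ∂μ) - (∫ ω, Y ω * X ω / Z ω ^ 2 ∂μ) ≤ ∫ ω, Y ω / (X ω + Z ω) ∂μ := by
  have hpt : ∀ ω, Y ω / Z ω - Y ω * X ω / Z ω ^ 2 ≤ Y ω / (X ω + Z ω) ∧
      0 ≤ Y ω / Z ω - Y ω * X ω / Z ω ^ 2 := by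
    intro ω
    rcases eq_or_lt_of_le ((hY ω).trans (hYZ ω)) with hz | hz
    · have hy0 : Y ω = 0 := le_antisymm (hz ▸ hYZ ω) (hY ω)
      constructor <;> simp [hy0]
    · have hxz : 0 < X ω + Z ω := by linarith [hX ω]
      have hXleZ : X ω ≤ Z ω := not_lt.1 fun h => absurd (hZX ω h) hz.ne'
      constructor
      · have e : Y ω / Z ω - Y ω / (X ω + Z ω) = Y ω * X ω / (Z ω * (X ω + Z ω)) := by
          field_simp
          ring
        have h2 : Y ω * X ω / (Z ω * (X ω + Z ω)) ≤ Y ω * X ω / Z ω ^ 2 :=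
          div_le_div_of_nonneg_left (mul_nonneg (hY ω) (hX ω)) (by positivity)
            (by nlinarith [hX ω])
        linarith
      · have e : Y ω / Z ω - Y ω * X ω / Z ω ^ 2 = Y ω * (Z ω - X ω) / Z ω ^ 2 := by
          field_simp
        rw [e]
        exact div_nonneg (mul_nonneg (hY ω) (by linarith)) (by positivity)
  constructor
  · rw [← integral_sub hiR hia]
    exact integral_nonneg fun ω => (hpt ω).2
  · rw [← integral_sub hiR hia]
    exact integral_mono (hiR.sub hia) hiA fun ω => (hpt ω).1


private lemma ratio_mem (y z : ℝ) (hy : 0 ≤ y) (hyz : y ≤ z) : 0 ≤ y / z ∧ y / z ≤ 1 := by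
  rcases eq_or_lt_of_le (hy.trans hyz) with hz | hz
  · rw [← hz]
    norm_num
  · exact ⟨div_nonneg hy hz.le, (div_le_one hz).2 hyz⟩

private lemma div_add_le (x y z : ℝ) (hx : 0 ≤ x) (hy : 0 ≤ y) (hyz : y ≤ z) :
    y / (x + z) ≤ y / z := by
  rcases eq_or_lt_of_le (hy.trans hyz) with hz | hz
  · have hy0 : y = 0 := le_antisymm (hz ▸ hyz) hy
    simp [hy0]
  · exact div_le_div_of_nonneg_left hy hz (by linarith)

/-- Covariance inequality (Lemma A.4 of the paper): if `X ≥ 0`,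
`Z_1 ≥ Y_1 ≥ 0`, `Z_2 ≥ Y_2 ≥ 0`, `Y_1 ⊥ (Y_2, Z_2)`, `Y_2 ⊥ (Y_1, Z_1)`,
and `Z_i < X` only when `Z_i = 0`, then (with the convention `0/0 = 0`)
`Cov(Y_1/(X+Z_1), Y_2/(X+Z_2))` is bounded by
`E[Y_1/Z_1]E[Y_2X/Z_2²] + E[Y_2/Z_2]E[Y_1X/Z_1²]
  + (E[Z_1]E[Z_2])⁻¹ √(E[(Y_1(Z_1−E Z_1)/Z_1)²] E[(Y_2(Z_2−E Z_2)/Z_2)²])`. -/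
theorem covariance_ratio_inequality
    {Ω : Type*} [MeasurableSpace Ω] (μ : Measure Ω) [IsProbabilityMeasure μ]
    (X Y1 Y2 Z1 Z2 : Ω → ℝ)
    (hXm : Measurable X) (hY1m : Measurable Y1) (hY2m : Measurable Y2)
    (hZ1m : Measurable Z1) (hZ2m : Measurable Z2)
    (hX : ∀ ω, 0 ≤ X ω)
    (hY1 : ∀ ω, 0 ≤ Y1 ω) (hY1Z1 : ∀ ω, Y1 ω ≤ Z1 ω)
    (hY2 : ∀ ω, 0 ≤ Y2 ω) (hY2Z2 : ∀ ω, Y2 ω ≤ Z2 ω)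
    (hZ1X : ∀ ω, Z1 ω < X ω → Z1 ω = 0)
    (hZ2X : ∀ ω, Z2 ω < X ω → Z2 ω = 0)
    (hind1 : IndepFun Y1 (fun ω => (Y2 ω, Z2 ω)) μ)
    (hind2 : IndepFun Y2 (fun ω => (Y1 ω, Z1 ω)) μ)
    -- all expectations appearing are assumed finite:
    (hi1 : Integrable (fun ω => Y1 ω / (X ω + Z1 ω)) μ)
    (hi2 : Integrable (fun ω => Y2 ω / (X ω + Z2 ω)) μ)
    (hi3 : Integrable (fun ω => (Y1 ω / (X ω + Z1 ω)) * (Y2 ω / (X ω + Z2 ω))) μ)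
    (hi4 : Integrable (fun ω => Y1 ω / Z1 ω) μ)
    (hi5 : Integrable (fun ω => Y2 ω / Z2 ω) μ)
    (hi6 : Integrable (fun ω => Y1 ω * X ω / (Z1 ω) ^ 2) μ)
    (hi7 : Integrable (fun ω => Y2 ω * X ω / (Z2 ω) ^ 2) μ)
    (hi8 : Integrable (fun ω => (Y1 ω * (Z1 ω - ∫ x, Z1 x ∂μ) / Z1 ω) ^ 2) μ)
    (hi9 : Integrable (fun ω => (Y2 ω * (Z2 ω - ∫ x, Z2 x ∂μ) / Z2 ω) ^ 2) μ)
    (hi10 : Integrable Z1 μ) (hi11 : Integrable Z2 μ) :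
    (∫ ω, (Y1 ω / (X ω + Z1 ω)) * (Y2 ω / (X ω + Z2 ω)) ∂μ)
        - (∫ ω, Y1 ω / (X ω + Z1 ω) ∂μ) * (∫ ω, Y2 ω / (X ω + Z2 ω) ∂μ)
      ≤ (∫ ω, Y1 ω / Z1 ω ∂μ) * (∫ ω, Y2 ω * X ω / (Z2 ω) ^ 2 ∂μ)
        + (∫ ω, Y2 ω / Z2 ω ∂μ) * (∫ ω, Y1 ω * X ω / (Z1 ω) ^ 2 ∂μ)
        + (1 / ((∫ ω, Z1 ω ∂μ) * (∫ ω, Z2 ω ∂μ)))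
            * Real.sqrt
                ((∫ ω, (Y1 ω * (Z1 ω - ∫ x, Z1 x ∂μ) / Z1 ω) ^ 2 ∂μ)
                  * (∫ ω, (Y2 ω * (Z2 ω - ∫ x, Z2 x ∂μ) / Z2 ω) ^ 2 ∂μ)) := by
  set m1 := ∫ ω, Z1 ω ∂μ with hm1def
  set m2 := ∫ ω, Z2 ω ∂μ with hm2def
  have hZ1nn : ∀ ω, 0 ≤ Z1 ω := fun ω => (hY1 ω).trans (hY1Z1 ω)
  have hZ2nn : ∀ ω, 0 ≤ Z2 ω := fun ω => (hY2 ω).trans (hY2Z2 ω)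
  have hm1nn : 0 ≤ m1 := integral_nonneg hZ1nn
  have hm2nn : 0 ≤ m2 := integral_nonneg hZ2nn
  obtain ⟨hl1a, hl1b⟩ := lower_bound hX hY1 hY1Z1 hZ1X hi1 hi4 hi6
  obtain ⟨hl2a, hl2b⟩ := lower_bound hX hY2 hY2Z2 hZ2X hi2 hi5 hi7
  have hA1nn : 0 ≤ ∫ ω, Y1 ω / (X ω + Z1 ω) ∂μ :=
    integral_nonneg fun ω => div_nonneg (hY1 ω) (add_nonneg (hX ω) (hZ1nn ω))
  have hA2nn : 0 ≤ ∫ ω, Y2 ω / (X ω + Z2 ω) ∂μ :=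
    integral_nonneg fun ω => div_nonneg (hY2 ω) (add_nonneg (hX ω) (hZ2nn ω))
  have ha1nn : 0 ≤ ∫ ω, Y1 ω * X ω / (Z1 ω) ^ 2 ∂μ :=
    integral_nonneg fun ω => div_nonneg (mul_nonneg (hY1 ω) (hX ω)) (sq_nonneg _)
  have ha2nn : 0 ≤ ∫ ω, Y2 ω * X ω / (Z2 ω) ^ 2 ∂μ :=
    integral_nonneg fun ω => div_nonneg (mul_nonneg (hY2 ω) (hX ω)) (sq_nonneg _)
  have hlow : ((∫ ω, Y1 ω / Z1 ω ∂μ) - ∫ ω, Y1 ω * X ω / (Z1 ω) ^ 2 ∂μ)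
      * ((∫ ω, Y2 ω / Z2 ω ∂μ) - ∫ ω, Y2 ω * X ω / (Z2 ω) ^ 2 ∂μ)
      ≤ (∫ ω, Y1 ω / (X ω + Z1 ω) ∂μ) * ∫ ω, Y2 ω / (X ω + Z2 ω) ∂μ :=
    mul_le_mul hl1b hl2b hl2a hA1nn
  have hup : (∫ ω, (Y1 ω / (X ω + Z1 ω)) * (Y2 ω / (X ω + Z2 ω)) ∂μ)
      ≤ (∫ ω, Y1 ω / Z1 ω ∂μ) * (∫ ω, Y2 ω / Z2 ω ∂μ)
        + (1 / (m1 * m2))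
            * Real.sqrt ((∫ ω, (Y1 ω * (Z1 ω - m1) / Z1 ω) ^ 2 ∂μ)
                * (∫ ω, (Y2 ω * (Z2 ω - m2) / Z2 ω) ^ 2 ∂μ)) := by
    rcases eq_or_lt_of_le hm1nn with hm1z | hm1p
    · -- m1 = 0 : Z1 = 0 a.e., so Y1 = 0 a.e.
      have hZ1ae : Z1 =ᵐ[μ] 0 :=
        (integral_eq_zero_iff_of_nonneg hZ1nn hi10).1 hm1z.symm
      have hY1ae : ∀ᵐ ω ∂μ, Y1 ω = 0 := by
        filter_upwards [hZ1ae] with ω h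
        simp only [Pi.zero_apply] at h
        exact le_antisymm (by rw [← h]; exact hY1Z1 ω) (hY1 ω)
      have h1 : (∫ ω, (Y1 ω / (X ω + Z1 ω)) * (Y2 ω / (X ω + Z2 ω)) ∂μ) = 0 :=
        integral_eq_zero_of_ae (by filter_upwards [hY1ae] with ω h; simp [h])
      have h2 : (∫ ω, Y1 ω / Z1 ω ∂μ) = 0 :=
        integral_eq_zero_of_ae (by filter_upwards [hY1ae] with ω h; simp [h])
      rw [h1, h2, ← hm1z]
      simp
    rcases eq_or_lt_of_le hm2nn with hm2z | hm2p
    · have hZ2ae : Z2 =ᵐ[μ] 0 :=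
        (integral_eq_zero_iff_of_nonneg hZ2nn hi11).1 hm2z.symm
      have hY2ae : ∀ᵐ ω ∂μ, Y2 ω = 0 := by
        filter_upwards [hZ2ae] with ω h
        simp only [Pi.zero_apply] at h
        exact le_antisymm (by rw [← h]; exact hY2Z2 ω) (hY2 ω)
      have h1 : (∫ ω, (Y1 ω / (X ω + Z1 ω)) * (Y2 ω / (X ω + Z2 ω)) ∂μ) = 0 :=
        integral_eq_zero_of_ae (by filter_upwards [hY2ae] with ω h; simp [h])
      have h2 : (∫ ω, Y2 ω / Z2 ω ∂μ) = 0 :=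
        integral_eq_zero_of_ae (by filter_upwards [hY2ae] with ω h; simp [h])
      rw [h1, h2, ← hm2z]
      simp
    · -- main case : m1 > 0, m2 > 0
      have hm12 : 0 < m1 * m2 := mul_pos hm1p hm2p
      have hW1m : AEStronglyMeasurable (fun ω => Y1 ω * (Z1 ω - m1) / Z1 ω) μ :=
        ((hY1m.mul (hZ1m.sub measurable_const)).div hZ1m).aestronglyMeasurable
      have hW2m : AEStronglyMeasurable (fun ω => Y2 ω * (Z2 ω - m2) / Z2 ω) μ :=
        ((hY2m.mul (hZ2m.sub measurable_const)).div hZ2m).aestronglyMeasurable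
      have hR1m : AEStronglyMeasurable (fun ω => Y1 ω / Z1 ω) μ :=
        (hY1m.div hZ1m).aestronglyMeasurable
      have hR2m : AEStronglyMeasurable (fun ω => Y2 ω / Z2 ω) μ :=
        (hY2m.div hZ2m).aestronglyMeasurable
      have hY1i : Integrable Y1 μ := by
        refine Integrable.mono' hi10 hY1m.aestronglyMeasurable
          (Filter.Eventually.of_forall fun ω => ?_)
        rw [Real.norm_eq_abs, abs_of_nonneg (hY1 ω)]
        exact hY1Z1 ω
      have hY2i : Integrable Y2 μ := by
        refine Integrable.mono' hi11 hY2m.aestronglyMeasurable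
          (Filter.Eventually.of_forall fun ω => ?_)
        rw [Real.norm_eq_abs, abs_of_nonneg (hY2 ω)]
        exact hY2Z2 ω
      have hW1i : Integrable (fun ω => Y1 ω * (Z1 ω - m1) / Z1 ω) μ := by
        refine Integrable.mono' ((hi10.sub (integrable_const m1)).abs) hW1m
          (Filter.Eventually.of_forall fun ω => ?_)
        obtain ⟨hr0, hr1⟩ := ratio_mem (Y1 ω) (Z1 ω) (hY1 ω) (hY1Z1 ω)
        rw [Real.norm_eq_abs, mul_div_right_comm, abs_mul, abs_of_nonneg hr0]
        exact mul_le_of_le_one_left (abs_nonneg _) hr1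
      have hW2i : Integrable (fun ω => Y2 ω * (Z2 ω - m2) / Z2 ω) μ := by
        refine Integrable.mono' ((hi11.sub (integrable_const m2)).abs) hW2m
          (Filter.Eventually.of_forall fun ω => ?_)
        obtain ⟨hr0, hr1⟩ := ratio_mem (Y2 ω) (Z2 ω) (hY2 ω) (hY2Z2 ω)
        rw [Real.norm_eq_abs, mul_div_right_comm, abs_mul, abs_of_nonneg hr0]
        exact mul_le_of_le_one_left (abs_nonneg _) hr1
      have hR1id : ∀ ω, Y1 ω / Z1 ω = (Y1 ω - Y1 ω * (Z1 ω - m1) / Z1 ω) / m1 := by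
        intro ω
        rcases eq_or_lt_of_le (hZ1nn ω) with hz | hz
        · have hy0 : Y1 ω = 0 := le_antisymm (hz ▸ hY1Z1 ω) (hY1 ω)
          simp [hy0]
        · field_simp
          ring
      have hR2id : ∀ ω, Y2 ω / Z2 ω = (Y2 ω - Y2 ω * (Z2 ω - m2) / Z2 ω) / m2 := by
        intro ω
        rcases eq_or_lt_of_le (hZ2nn ω) with hz | hz
        · have hy0 : Y2 ω = 0 := le_antisymm (hz ▸ hY2Z2 ω) (hY2 ω)
          simp [hy0]
        · field_simp
          ring
      have hR1eq : (∫ ω, Y1 ω / Z1 ω ∂μ)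
          = ((∫ ω, Y1 ω ∂μ) - ∫ ω, Y1 ω * (Z1 ω - m1) / Z1 ω ∂μ) / m1 := by
        rw [show (fun ω => Y1 ω / Z1 ω)
            = fun ω => (Y1 ω - Y1 ω * (Z1 ω - m1) / Z1 ω) / m1 from funext hR1id,
          integral_div, integral_sub hY1i hW1i]
      have hR2eq : (∫ ω, Y2 ω / Z2 ω ∂μ)
          = ((∫ ω, Y2 ω ∂μ) - ∫ ω, Y2 ω * (Z2 ω - m2) / Z2 ω ∂μ) / m2 := by
        rw [show (fun ω => Y2 ω / Z2 ω)
            = fun ω => (Y2 ω - Y2 ω * (Z2 ω - m2) / Z2 ω) / m2 from funext hR2id,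
          integral_div, integral_sub hY2i hW2i]
      have hR1R2i : Integrable (fun ω => (Y1 ω / Z1 ω) * (Y2 ω / Z2 ω)) μ := by
        refine Integrable.mono' (integrable_const (1 : ℝ)) (hR1m.mul hR2m)
          (Filter.Eventually.of_forall fun ω => ?_)
        obtain ⟨h10, h11⟩ := ratio_mem (Y1 ω) (Z1 ω) (hY1 ω) (hY1Z1 ω)
        obtain ⟨h20, h21⟩ := ratio_mem (Y2 ω) (Z2 ω) (hY2 ω) (hY2Z2 ω)
        rw [Real.norm_eq_abs, abs_mul, abs_of_nonneg h10, abs_of_nonneg h20]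
        exact mul_le_one₀ h11 h20 h21
      have hstep1 : (∫ ω, (Y1 ω / (X ω + Z1 ω)) * (Y2 ω / (X ω + Z2 ω)) ∂μ)
          ≤ ∫ ω, (Y1 ω / Z1 ω) * (Y2 ω / Z2 ω) ∂μ := by
        refine integral_mono hi3 hR1R2i fun ω => ?_
        exact mul_le_mul (div_add_le _ _ _ (hX ω) (hY1 ω) (hY1Z1 ω))
          (div_add_le _ _ _ (hX ω) (hY2 ω) (hY2Z2 ω))
          (div_nonneg (hY2 ω) (add_nonneg (hX ω) (hZ2nn ω)))
          (ratio_mem (Y1 ω) (Z1 ω) (hY1 ω) (hY1Z1 ω)).1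
      have hRR : (∫ ω, (Y1 ω / Z1 ω) * (Y2 ω / Z2 ω) ∂μ)
          = (∫ ω, (Y1 ω - Y1 ω * (Z1 ω - m1) / Z1 ω)
              * (Y2 ω - Y2 ω * (Z2 ω - m2) / Z2 ω) ∂μ) / (m1 * m2) := by
        rw [show (fun ω => (Y1 ω / Z1 ω) * (Y2 ω / Z2 ω))
            = fun ω => ((Y1 ω - Y1 ω * (Z1 ω - m1) / Z1 ω)
              * (Y2 ω - Y2 ω * (Z2 ω - m2) / Z2 ω)) / (m1 * m2) from
          funext fun ω => by rw [hR1id ω, hR2id ω, div_mul_div_comm], integral_div]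
      -- independence facts
      have hφ1 : Measurable (fun p : ℝ × ℝ => p.1 * (p.2 - m1) / p.2) :=
        (measurable_fst.mul (measurable_snd.sub measurable_const)).div measurable_snd
      have hφ2 : Measurable (fun p : ℝ × ℝ => p.1 * (p.2 - m2) / p.2) :=
        (measurable_fst.mul (measurable_snd.sub measurable_const)).div measurable_snd
      have hindY1Y2 : IndepFun Y1 Y2 μ := hind1.comp measurable_id measurable_fst
      have hindY1W2 : IndepFun Y1 (fun ω => Y2 ω * (Z2 ω - m2) / Z2 ω) μ :=
        hind1.comp measurable_id hφ2
      have hindW1Y2 : IndepFun (fun ω => Y1 ω * (Z1 ω - m1) / Z1 ω) Y2 μ :=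
        (hind2.comp measurable_id hφ1).symm
      have hY1Y2i : Integrable (fun ω => Y1 ω * Y2 ω) μ :=
        hindY1Y2.integrable_mul hY1i hY2i
      have hY1W2i : Integrable (fun ω => Y1 ω * (Y2 ω * (Z2 ω - m2) / Z2 ω)) μ :=
        hindY1W2.integrable_mul hY1i hW2i
      have hW1Y2i : Integrable (fun ω => (Y1 ω * (Z1 ω - m1) / Z1 ω) * Y2 ω) μ :=
        hindW1Y2.integrable_mul hW1i hY2i
      have hW1W2i : Integrable
          (fun ω => (Y1 ω * (Z1 ω - m1) / Z1 ω) * (Y2 ω * (Z2 ω - m2) / Z2 ω)) μ :=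
        integrable_mul_of_sq hW1m hW2m hi8 hi9
      have hPP : (∫ ω, (Y1 ω - Y1 ω * (Z1 ω - m1) / Z1 ω)
            * (Y2 ω - Y2 ω * (Z2 ω - m2) / Z2 ω) ∂μ)
          = (∫ ω, Y1 ω ∂μ) * (∫ ω, Y2 ω ∂μ)
            - (∫ ω, Y1 ω ∂μ) * (∫ ω, Y2 ω * (Z2 ω - m2) / Z2 ω ∂μ)
            - (∫ ω, Y1 ω * (Z1 ω - m1) / Z1 ω ∂μ) * (∫ ω, Y2 ω ∂μ)
            + ∫ ω, (Y1 ω * (Z1 ω - m1) / Z1 ω) * (Y2 ω * (Z2 ω - m2) / Z2 ω) ∂μ := by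
        have I2 : Integrable
            (fun ω => Y1 ω * Y2 ω - Y1 ω * (Y2 ω * (Z2 ω - m2) / Z2 ω)) μ :=
          hY1Y2i.sub hY1W2i
        have I1 : Integrable
            (fun ω => Y1 ω * Y2 ω - Y1 ω * (Y2 ω * (Z2 ω - m2) / Z2 ω)
              - (Y1 ω * (Z1 ω - m1) / Z1 ω) * Y2 ω) μ := I2.sub hW1Y2i
        rw [show (fun ω => (Y1 ω - Y1 ω * (Z1 ω - m1) / Z1 ω)
              * (Y2 ω - Y2 ω * (Z2 ω - m2) / Z2 ω))
            = fun ω => Y1 ω * Y2 ω - Y1 ω * (Y2 ω * (Z2 ω - m2) / Z2 ω)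
              - (Y1 ω * (Z1 ω - m1) / Z1 ω) * Y2 ω
              + (Y1 ω * (Z1 ω - m1) / Z1 ω) * (Y2 ω * (Z2 ω - m2) / Z2 ω) from
          funext fun ω => by ring,
          integral_add I1 hW1W2i, integral_sub I2 hW1Y2i, integral_sub hY1Y2i hY1W2i]
        have e1 : (∫ ω, Y1 ω * Y2 ω ∂μ) = (∫ ω, Y1 ω ∂μ) * ∫ ω, Y2 ω ∂μ := by
          exact hindY1Y2.integral_fun_mul_eq_mul_integral hY1i.aestronglyMeasurable hY2i.aestronglyMeasurable
        have e2 : (∫ ω, Y1 ω * (Y2 ω * (Z2 ω - m2) / Z2 ω) ∂μ)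
            = (∫ ω, Y1 ω ∂μ) * ∫ ω, Y2 ω * (Z2 ω - m2) / Z2 ω ∂μ := by
          exact hindY1W2.integral_fun_mul_eq_mul_integral hY1i.aestronglyMeasurable hW2i.aestronglyMeasurable
        have e3 : (∫ ω, (Y1 ω * (Z1 ω - m1) / Z1 ω) * Y2 ω ∂μ)
            = (∫ ω, Y1 ω * (Z1 ω - m1) / Z1 ω ∂μ) * ∫ ω, Y2 ω ∂μ := by
          exact hindW1Y2.integral_fun_mul_eq_mul_integral hW1i.aestronglyMeasurable hY2i.aestronglyMeasurable
        rw [e1, e2, e3]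
      have hcov := cov_le_sqrt hW1m hW2m hi8 hi9
      have key : (∫ ω, (Y1 ω - Y1 ω * (Z1 ω - m1) / Z1 ω)
            * (Y2 ω - Y2 ω * (Z2 ω - m2) / Z2 ω) ∂μ)
          ≤ ((∫ ω, Y1 ω ∂μ) - ∫ ω, Y1 ω * (Z1 ω - m1) / Z1 ω ∂μ)
            * ((∫ ω, Y2 ω ∂μ) - ∫ ω, Y2 ω * (Z2 ω - m2) / Z2 ω ∂μ)
            + Real.sqrt ((∫ ω, (Y1 ω * (Z1 ω - m1) / Z1 ω) ^ 2 ∂μ)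
                * (∫ ω, (Y2 ω * (Z2 ω - m2) / Z2 ω) ^ 2 ∂μ)) := by
        rw [hPP]
        nlinarith [hcov]
      calc (∫ ω, (Y1 ω / (X ω + Z1 ω)) * (Y2 ω / (X ω + Z2 ω)) ∂μ)
          ≤ ∫ ω, (Y1 ω / Z1 ω) * (Y2 ω / Z2 ω) ∂μ := hstep1
        _ = (∫ ω, (Y1 ω - Y1 ω * (Z1 ω - m1) / Z1 ω)
              * (Y2 ω - Y2 ω * (Z2 ω - m2) / Z2 ω) ∂μ) / (m1 * m2) := hRR
        _ ≤ (((∫ ω, Y1 ω ∂μ) - ∫ ω, Y1 ω * (Z1 ω - m1) / Z1 ω ∂μ)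
              * ((∫ ω, Y2 ω ∂μ) - ∫ ω, Y2 ω * (Z2 ω - m2) / Z2 ω ∂μ)
              + Real.sqrt ((∫ ω, (Y1 ω * (Z1 ω - m1) / Z1 ω) ^ 2 ∂μ)
                * (∫ ω, (Y2 ω * (Z2 ω - m2) / Z2 ω) ^ 2 ∂μ))) / (m1 * m2) :=
            (div_le_div_iff_of_pos_right hm12).2 key
        _ = (∫ ω, Y1 ω / Z1 ω ∂μ) * (∫ ω, Y2 ω / Z2 ω ∂μ)
            + (1 / (m1 * m2))
                * Real.sqrt ((∫ ω, (Y1 ω * (Z1 ω - m1) / Z1 ω) ^ 2 ∂μ)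
                    * (∫ ω, (Y2 ω * (Z2 ω - m2) / Z2 ω) ^ 2 ∂μ)) := by
            rw [hR1eq, hR2eq]
            field_simp
  have hR1nn : 0 ≤ ∫ ω, Y1 ω / Z1 ω ∂μ :=
    integral_nonneg fun ω => div_nonneg (hY1 ω) (hZ1nn ω)
  have hR2nn : 0 ≤ ∫ ω, Y2 ω / Z2 ω ∂μ :=
    integral_nonneg fun ω => div_nonneg (hY2 ω) (hZ2nn ω)
  nlinarith [hup, hlow, mul_nonneg ha1nn ha2nn]
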